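/- Let G be a finite connected graph with n vertices and m (undirected) edges. The space of vectors x ∈ C^{2m} with τ x = −x satisfying (δ_t − δ_s) D^{-1} (δ_t* − δ_s*) x = 0 has dimension β = m − n + 1 (the first Betti number of G). -/

import Mathlib

open Matrix BigOperators
open scoped Classical Kronecker

set_option maxHeartbeats 1000000
set_option synthInstance.maxHeartbeats 400000

noncomputable section

variable {V E : Type*} [Fintype V] [Fintype E] [DecidableEq V] [DecidableEq E]

/-- Incidence indicator matrix: entry `(v, e)` is `1` iff `f e = v`. -/
def incMat (f : E → V) : Matrix V E ℂ :=
  Matrix.of fun v e => if f e = v then 1 else 0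

/-- Edge-reversal permutation matrix. -/
def revMat (rev : E → E) : Matrix E E ℂ :=
  Matrix.of fun e f => if f = rev e then 1 else 0

/-- Degree of a vertex (number of oriented edges terminating there). -/
def deg (t : E → V) (v : V) : ℕ :=
  Finset.card (Finset.univ.filter fun e => t e = v)

/-- Diagonal degree matrix. -/
def degMat (t : E → V) : Matrix V V ℂ :=
  Matrix.diagonal fun v => (deg t v : ℂ)

/-- The bond-scattering matrix `S = 2 δ_s D⁻¹ δ_t* − τ`. -/
def bondS (s t : E → V) (rev : E → E) : Matrix E E ℂ :=
  (2 : ℂ) • ((incMat s).transpose * (degMat t)⁻¹ * incMat t) - revMat rev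

/-! ### Auxiliary material -/

/-- The setoid identifying each oriented edge with its reversal. -/
def revSetoid (rev : E → E) (hrev : Function.Involutive rev) : Setoid E where
  r a b := b = a ∨ b = rev a
  iseqv := by
    refine ⟨fun a => Or.inl rfl, ?_, ?_⟩
    · rintro a b (rfl | rfl)
      · exact Or.inl rfl
      · exact Or.inr (hrev a).symm
    · rintro a b c hab hbc
      rcases hab with rfl | rfl
      · exact hbc
      · rcases hbc with h | h
        · exact Or.inr h
        · rw [hrev] at h; exact Or.inl h

lemma revSetoid_card (rev : E → E) (hrev : Function.Involutive rev)
    (hne : ∀ e, rev e ≠ e) :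
    Fintype.card E = 2 * Fintype.card (Quotient (revSetoid rev hrev)) := by
  classical
  let f : Quotient (revSetoid rev hrev) × Bool → E :=
    fun p => if p.2 then p.1.out else rev p.1.out
  have hmk : ∀ (q : Quotient (revSetoid rev hrev)) (b : Bool),
      Quotient.mk (revSetoid rev hrev) (f (q, b)) = q := by
    intro q b
    cases b
    · show Quotient.mk _ (rev q.out) = q
      rw [Quotient.sound (Or.inr (hrev q.out).symm : (revSetoid rev hrev) (rev q.out) q.out)]
      exact q.out_eq
    · show Quotient.mk _ q.out = q
      exact q.out_eq
  have hinj : Function.Injective f := by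
    rintro ⟨q, b⟩ ⟨q', b'⟩ h
    have hq : q = q' := by rw [← hmk q b, ← hmk q' b']; exact congrArg _ h
    subst hq
    cases b <;> cases b'
    · rfl
    · exact absurd (show rev q.out = q.out from h) (hne _)
    · exact absurd (show rev q.out = q.out from h.symm) (hne _)
    · rfl
  have hsurj : Function.Surjective f := by
    intro e
    rcases (Quotient.mk_out (s := revSetoid rev hrev) e : _ ∨ _) with h | h
    · exact ⟨(Quotient.mk _ e, true), h.symm⟩
    · refine ⟨(Quotient.mk _ e, false), ?_⟩
      show rev _ = e
      exact h.symm
  have := Fintype.card_congr (Equiv.ofBijective f ⟨hinj, hsurj⟩)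
  rw [Fintype.card_prod, Fintype.card_bool] at this
  omega

/-- The submodule of `rev`-symmetric vectors. -/
def symSub (rev : E → E) : Submodule ℂ (E → ℂ) where
  carrier := {x | ∀ e, x (rev e) = x e}
  add_mem' := by intro a b ha hb e; simp [ha e, hb e]
  zero_mem' := by intro e; rfl
  smul_mem' := by intro c x hx e; simp [hx e]

lemma finrank_symSub (rev : E → E) (hrev : Function.Involutive rev) :
    Module.finrank ℂ (symSub rev) = Fintype.card (Quotient (revSetoid rev hrev)) := by
  classical
  let F : symSub rev →ₗ[ℂ] (Quotient (revSetoid rev hrev) → ℂ) :=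
    (LinearMap.funLeft ℂ ℂ Quotient.out).comp (symSub rev).subtype
  have hF : ∀ (x : symSub rev) (q : Quotient (revSetoid rev hrev)),
      F x q = (x : E → ℂ) q.out := fun _ _ => rfl
  have hbij : Function.Bijective F := by
    constructor
    · intro x y hxy
      ext e
      have hx : (x : E → ℂ) (Quotient.mk (revSetoid rev hrev) e).out
          = (y : E → ℂ) (Quotient.mk (revSetoid rev hrev) e).out := by
        have := congrFun hxy (Quotient.mk (revSetoid rev hrev) e)
        rwa [hF, hF] at this
      rcases (Quotient.mk_out (s := revSetoid rev hrev) e : _ ∨ _) with h | h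
      · rw [h]; exact hx
      · calc (x : E → ℂ) e = (x : E → ℂ) (rev _) := by rw [← h]
          _ = (x : E → ℂ) _ := x.2 _
          _ = (y : E → ℂ) _ := hx
          _ = (y : E → ℂ) (rev _) := (y.2 _).symm
          _ = (y : E → ℂ) e := by rw [← h]
    · intro y
      refine ⟨⟨fun e => y (Quotient.mk (revSetoid rev hrev) e), fun e => ?_⟩, ?_⟩
      · exact congrArg y (Quotient.sound (Or.inr (hrev e).symm))
      · funext q
        rw [hF]
        exact congrArg y (Quotient.out_eq q)
  rw [(LinearEquiv.ofBijective F hbij).finrank_eq, Module.finrank_fintype_fun_eq_card]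

/-- For a finite connected graph with `n` vertices and `m` undirected edges
(`2m` oriented edges), the space of τ-antisymmetric harmonic 1-forms has
dimension `β = m − n + 1`, stated additively as `dim + n = m + 1`. -/
theorem stmt10 [Nonempty V] (s t : E → V) (rev : E → E)
    (hrev : Function.Involutive rev) (hne : ∀ e, rev e ≠ e)
    (hsr : ∀ e, s (rev e) = t e) (htr : ∀ e, t (rev e) = s e)
    (hd : ∀ v, 0 < deg t v)
    (hconn : ∀ a b : V, Relation.ReflTransGen (fun p q => ∃ e, s e = p ∧ t e = q) a b) :
    Module.finrank ℂ
        ↥(LinearMap.ker (Matrix.mulVecLin (revMat rev + 1)) ⊓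
          LinearMap.ker (Matrix.mulVecLin
            (((incMat t).transpose - (incMat s).transpose) * (degMat t)⁻¹ *
              (incMat t - incMat s))))
      + Fintype.card V = Fintype.card E / 2 + 1 := by
  classical
  set A : Matrix V E ℂ := incMat t - incMat s with hA
  -- pointwise formulas
  have hAmv : ∀ (x : E → ℂ) (v : V), (A *ᵥ x) v =
      (∑ e, (if t e = v then (1:ℂ) else 0) * x e)
        - ∑ e, (if s e = v then (1:ℂ) else 0) * x e := by
    intro x v
    simp [hA, Matrix.sub_mulVec, Matrix.mulVec, dotProduct, incMat, sub_mul,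
      Finset.sum_sub_distrib, ite_mul, one_mul, zero_mul]
  have hAtmv : ∀ (g : V → ℂ) (e : E), (Aᵀ *ᵥ g) e = g (t e) - g (s e) := by
    intro g e
    simp [hA, Matrix.mulVec, dotProduct, incMat, sub_mul, Finset.sum_sub_distrib,
      ite_mul, Finset.sum_ite_eq]
  have hψmv : ∀ (x : E → ℂ) (e : E), ((revMat rev + 1) *ᵥ x) e = x (rev e) + x e := by
    intro x e
    rw [Matrix.add_mulVec, Matrix.one_mulVec, Pi.add_apply]
    congr 1
    simp [revMat, Matrix.mulVec, dotProduct, ite_mul, one_mul, zero_mul,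
      Finset.sum_ite_eq']
  -- degree matrix inverse
  have hdne : ∀ v, ((deg t v : ℂ)) ≠ 0 := fun v => Nat.cast_ne_zero.mpr (hd v).ne'
  have hDinv : (degMat t)⁻¹ = Matrix.diagonal (fun v => ((deg t v : ℂ))⁻¹) := by
    apply Matrix.inv_eq_right_inv
    rw [degMat, Matrix.diagonal_mul_diagonal]
    rw [show ((fun v => (deg t v : ℂ) * ((deg t v : ℂ))⁻¹)) = fun _ => 1 from
      funext fun v => mul_inv_cancel₀ (hdne v), Matrix.diagonal_one]
  -- Step A : ker L = ker A
  have hkerL : LinearMap.ker (Matrix.mulVecLin (Aᵀ * (degMat t)⁻¹ * A))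
      = LinearMap.ker (Matrix.mulVecLin A) := by
    ext x
    simp only [LinearMap.mem_ker, Matrix.mulVecLin_apply]
    constructor
    · intro hx
      set y : V → ℂ := A *ᵥ x with hy
      have hstar : A *ᵥ star x = star y := by
        funext v
        simp only [hy, Matrix.mulVec, dotProduct, Pi.star_apply]
        rw [show star (∑ e, A v e * x e) = ∑ e, star (A v e) * star (x e) by
          rw [star_sum]; exact Finset.sum_congr rfl fun e _ => star_mul' _ _]
        refine Finset.sum_congr rfl fun e _ => ?_
        congr 1
        simp [hA, incMat, Matrix.sub_apply, apply_ite (star : ℂ → ℂ)]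
      have hdot : star x ⬝ᵥ ((Aᵀ * (degMat t)⁻¹ * A) *ᵥ x)
          = ∑ v, ((deg t v : ℂ))⁻¹ * (star (y v) * y v) := by
        rw [← Matrix.mulVec_mulVec, ← Matrix.mulVec_mulVec, Matrix.dotProduct_mulVec,
          Matrix.vecMul_transpose, hstar, hDinv]
        simp only [dotProduct, Matrix.mulVec_diagonal, Pi.star_apply]
        exact Finset.sum_congr rfl fun v _ => by ring
      rw [hx] at hdot
      simp only [dotProduct_zero] at hdot
      have hcast : (∑ v, ((deg t v : ℂ))⁻¹ * (star (y v) * y v))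
          = ((∑ v, ((deg t v : ℝ))⁻¹ * Complex.normSq (y v) : ℝ) : ℂ) := by
        push_cast
        refine Finset.sum_congr rfl fun v _ => ?_
        rw [Complex.normSq_eq_conj_mul_self]
        rfl
      have hsum0 : (∑ v, ((deg t v : ℝ))⁻¹ * Complex.normSq (y v)) = 0 := by
        have : ((∑ v, ((deg t v : ℝ))⁻¹ * Complex.normSq (y v) : ℝ) : ℂ) = 0 := by
          rw [← hcast, ← hdot]
        exact_mod_cast this
      have hzero := (Finset.sum_eq_zero_iff_of_nonneg (fun v _ =>
        mul_nonneg (inv_nonneg.mpr (Nat.cast_nonneg _)) (Complex.normSq_nonneg _))).mp hsum0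
      funext v
      have hv := hzero v (Finset.mem_univ v)
      have hpos : ((deg t v : ℝ))⁻¹ ≠ 0 :=
        inv_ne_zero (Nat.cast_ne_zero.mpr (hd v).ne')
      have := (mul_eq_zero.mp hv).resolve_left hpos
      exact Complex.normSq_eq_zero.mp this
    · intro hx
      rw [← Matrix.mulVec_mulVec, ← Matrix.mulVec_mulVec, hx]
      simp
  -- Symmetric vectors are in ker A
  have hsymker : ∀ y : E → ℂ, y ∈ symSub rev → A *ᵥ y = 0 := by
    intro y hy
    funext v
    rw [hAmv]
    have : (∑ e, (if s e = v then (1:ℂ) else 0) * y e)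
        = ∑ e, (if t e = v then (1:ℂ) else 0) * y e := by
      refine Fintype.sum_equiv (Function.Involutive.toPerm rev hrev) _ _ fun e => ?_
      simp only [Function.Involutive.coe_toPerm]
      simp only [htr, hy e]
    rw [this, sub_self]
    rfl
  -- the map φ : ker A → (E → ℂ), x ↦ (1 + τ) x
  set ψ : (E → ℂ) →ₗ[ℂ] (E → ℂ) := Matrix.mulVecLin (revMat rev + 1) with hψ
  set kerB : Submodule ℂ (E → ℂ) := LinearMap.ker (Matrix.mulVecLin A) with hkerB
  set φ : kerB →ₗ[ℂ] (E → ℂ) := ψ.comp kerB.subtype with hφ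
  have hkerφ : LinearMap.ker φ = Submodule.comap kerB.subtype (LinearMap.ker ψ ⊓ kerB) := by
    rw [hφ, LinearMap.ker_comp]
    ext x
    simp only [Submodule.mem_comap, Submodule.coe_subtype, Submodule.mem_inf]
    exact ⟨fun h => ⟨h, x.2⟩, fun h => h.1⟩
  have hkerφrank : Module.finrank ℂ (LinearMap.ker φ)
      = Module.finrank ℂ ↥(LinearMap.ker ψ ⊓ kerB) := by
    rw [hkerφ]
    exact (Submodule.comapSubtypeEquivOfLe
      (inf_le_right : LinearMap.ker ψ ⊓ kerB ≤ kerB)).finrank_eq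
  have hrange : LinearMap.range φ = symSub rev := by
    apply le_antisymm
    · rintro _ ⟨x, rfl⟩
      intro e
      show (ψ (x : E → ℂ)) (rev e) = (ψ (x : E → ℂ)) e
      rw [hψ]
      simp only [Matrix.mulVecLin_apply]
      rw [hψmv, hψmv, hrev e, add_comm]
    · intro y hy
      have hyk : y ∈ kerB := by rw [hkerB]; exact hsymker y hy
      refine ⟨⟨(2:ℂ)⁻¹ • y, Submodule.smul_mem _ _ hyk⟩, ?_⟩
      show ψ ((2:ℂ)⁻¹ • y) = y
      rw [_root_.map_smul]
      funext e
      rw [Pi.smul_apply, hψ]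
      simp only [Matrix.mulVecLin_apply]
      rw [hψmv, hy e]
      rw [smul_eq_mul]
      ring
  have hRN1 := LinearMap.finrank_range_add_finrank_ker φ
  -- rank of A via transpose
  have hkerAt : LinearMap.ker (Matrix.mulVecLin Aᵀ)
      = Submodule.span ℂ {(fun _ => 1 : V → ℂ)} := by
    apply le_antisymm
    · intro g hg
      simp only [LinearMap.mem_ker, Matrix.mulVecLin_apply] at hg
      have hst : ∀ e, g (t e) = g (s e) := by
        intro e
        have := congrFun hg e
        rw [hAtmv] at this
        exact sub_eq_zero.mp this
      have hconst : ∀ a b : V, g a = g b := by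
        intro a b
        induction hconn a b with
        | refl => rfl
        | tail _ hbc ih =>
          obtain ⟨e, hse, hte⟩ := hbc
          rw [ih, ← hse, ← hte, hst e]
      rw [Submodule.mem_span_singleton]
      refine ⟨g (Classical.arbitrary V), ?_⟩
      funext a
      simp [hconst (Classical.arbitrary V) a]
    · rw [Submodule.span_le, Set.singleton_subset_iff]
      simp only [SetLike.mem_coe, LinearMap.mem_ker, Matrix.mulVecLin_apply]
      funext e
      rw [hAtmv]
      simp
  have hone_ne : (fun _ => (1:ℂ) : V → ℂ) ≠ 0 := by
    intro h
    have := congrFun h (Classical.arbitrary V)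
    simp at this
  have hkerAtrank : Module.finrank ℂ (LinearMap.ker (Matrix.mulVecLin Aᵀ)) = 1 := by
    rw [hkerAt]
    exact finrank_span_singleton hone_ne
  have hRN2 := LinearMap.finrank_range_add_finrank_ker (Matrix.mulVecLin A)
  have hRN3 := LinearMap.finrank_range_add_finrank_ker (Matrix.mulVecLin Aᵀ)
  rw [Module.finrank_fintype_fun_eq_card] at hRN2 hRN3
  have htrank : Module.finrank ℂ (LinearMap.range (Matrix.mulVecLin Aᵀ))
      = Module.finrank ℂ (LinearMap.range (Matrix.mulVecLin A)) := by
    have := Matrix.rank_transpose A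
    exact this
  -- assemble
  have hcard := revSetoid_card rev hrev hne
  have hsymrank := finrank_symSub rev hrev
  rw [← Matrix.transpose_sub, ← hA, hkerL]
  rw [hrange, hsymrank] at hRN1
  rw [hkerφrank] at hRN1
  rw [hkerAtrank] at hRN3
  rw [← hkerB] at hRN2
  omega
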